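/- For c > 2 set γ(c) = √((c − 2)/c) and define N(c) = 12 γ(c)³ (7 γ(c)⁶ + 93 γ(c)⁴ + 105 γ(c)² + 35) / (35 (γ(c)² − 1)⁴). Then the function c ↦ N(c) is strictly monotonically increasing on the interval (2, ∞). -/
import Mathlib


/-- With `γ(c) = √((c-2)/c)` and
`N(c) = 12 γ³ (7γ⁶ + 93γ⁴ + 105γ² + 35) / (35 (γ² - 1)⁴)`, the function `N`
is strictly monotonically increasing on `(2, ∞)`. -/
theorem stmt_3 (γ N : ℝ → ℝ)
    (hγ : ∀ c, γ c = Real.sqrt ((c - 2) / c))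
    (hN : ∀ c, N c = 12 * γ c ^ 3 * (7 * γ c ^ 6 + 93 * γ c ^ 4 + 105 * γ c ^ 2 + 35) /
      (35 * (γ c ^ 2 - 1) ^ 4)) :
    StrictMonoOn N (Set.Ioi (2 : ℝ)) := by
  intro a ha b hb hab
  simp only [Set.mem_Ioi] at ha hb
  have ha0 : (0:ℝ) < a := by linarith
  have hb0 : (0:ℝ) < b := by linarith
  set x := γ a with hx
  set y := γ b with hy
  have hx2 : x ^ 2 = (a - 2) / a := by
    rw [hx, hγ, Real.sq_sqrt (div_nonneg (by linarith) ha0.le)]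
  have hy2 : y ^ 2 = (b - 2) / b := by
    rw [hy, hγ, Real.sq_sqrt (div_nonneg (by linarith) hb0.le)]
  have hxpos : 0 < x := by
    rw [hx, hγ]; exact Real.sqrt_pos.mpr (div_pos (by linarith) ha0)
  have hxy : x < y := by
    rw [hx, hy, hγ, hγ]
    apply Real.sqrt_lt_sqrt (div_nonneg (by linarith) ha0.le)
    rw [div_lt_div_iff₀ ha0 hb0]
    nlinarith
  have key : ∀ c : ℝ, 2 < c →
      N c = 12 * γ c ^ 3 * (7 * γ c ^ 6 + 93 * γ c ^ 4 + 105 * γ c ^ 2 + 35) * c ^ 4 / 560 := by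
    intro c hc
    have hc0 : (0:ℝ) < c := by linarith
    have hc2 : γ c ^ 2 = (c - 2) / c := by
      rw [hγ, Real.sq_sqrt (div_nonneg (by linarith) hc0.le)]
    have hden : (γ c ^ 2 - 1) ^ 4 = 16 / c ^ 4 := by
      rw [hc2]; field_simp; ring
    rw [hN, hden, show (35:ℝ) * (16 / c ^ 4) = 560 / c ^ 4 by ring,
      div_div_eq_mul_div]
  rw [key a ha, key b hb]
  have h1 : 12 * x ^ 3 < 12 * y ^ 3 := by
    have := pow_lt_pow_left₀ hxy hxpos.le (n := 3) (by norm_num)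
    linarith
  have h2 : 7 * x ^ 6 + 93 * x ^ 4 + 105 * x ^ 2 + 35 <
      7 * y ^ 6 + 93 * y ^ 4 + 105 * y ^ 2 + 35 := by
    have h6 := pow_lt_pow_left₀ hxy hxpos.le (n := 6) (by norm_num)
    have h4 := pow_lt_pow_left₀ hxy hxpos.le (n := 4) (by norm_num)
    have h2' := pow_lt_pow_left₀ hxy hxpos.le (n := 2) (by norm_num)
    linarith
  have h3 : a ^ 4 < b ^ 4 := pow_lt_pow_left₀ hab ha0.le (by norm_num)
  have hP : 0 < 7 * x ^ 6 + 93 * x ^ 4 + 105 * x ^ 2 + 35 := by positivity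
  have h12 : (0:ℝ) < 12 * x ^ 3 := by positivity
  have hfull : 12 * x ^ 3 * (7 * x ^ 6 + 93 * x ^ 4 + 105 * x ^ 2 + 35) * a ^ 4 <
      12 * y ^ 3 * (7 * y ^ 6 + 93 * y ^ 4 + 105 * y ^ 2 + 35) * b ^ 4 :=
    mul_lt_mul'' (mul_lt_mul'' h1 h2 h12.le hP.le) h3 (by positivity) (by positivity)
  linarith
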